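/- Let X = ∏_{i=1}^d X_i be a finite product of nonempty finite sets, R ⊆ X a subset, g : X → ℝ, and m ≠ n. Assume that for every (x_m, x_n) ∈ X_m × X_n the marginal count M_{mn}[χ_R](x_m,x_n) is positive. Let g̃_∅ = M_∅[χ_R·g]/M_∅[χ_R], g̃_m(x_m) = M_m[χ_R·g](x_m)/M_m[χ_R](x_m) − g̃_∅, and g̃_n(x_n) = M_n[χ_R·g](x_n)/M_n[χ_R](x_n) − g̃_∅. Then the function g̃_{mn}(x_m,x_n) = M_{mn}[χ_R·g](x_m,x_n)/M_{mn}[χ_R](x_m,x_n) − g̃_m(x_m) − g̃_n(x_n) − g̃_∅ minimizes the weighted approximation error ‖g − g̃_∅ − g̃_m − g̃_n − h‖²_{χ_R} = Σ_{x ∈ R} (g(x) − g̃_∅ − g̃_m(x_m) − g̃_n(x_n) − h(x_m,x_n))² over all functions h : X_m × X_n → ℝ. -/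

import Mathlib

open Classical in
private lemma sum_update_one (d : ℕ) (X : Fin d → Type) [∀ i, Fintype (X i)]
    (i : Fin d) (a : X i) (G : (∀ j, X j) → ℝ) :
    ∑ y : ∀ j, X j, G (Function.update y i a)
      = (Fintype.card (X i) : ℝ) * ∑ y : ∀ j, X j, (if y i = a then G y else 0) := by
  classical
  have hbij : Function.Bijective
      (fun p : X i × {x : ∀ j, X j // x i = a} => Function.update p.2.1 i p.1) := by
    constructor
    · rintro ⟨c, x, hx⟩ ⟨c', x', hx'⟩ hEq
      simp only at hEq
      have hc : c = c' := by
        have := congrFun hEq i; simpa using this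
      have hx2 : x = x' := by
        funext j
        by_cases hj : j = i
        · subst hj; rw [hx, hx']
        · have := congrFun hEq j
          simpa [Function.update_of_ne hj] using this
      simp [hc, hx2]
    · intro y
      refine ⟨⟨y i, ⟨Function.update y i a, by simp⟩⟩, ?_⟩
      simp [Function.update_idem]
  have h1 : ∑ y : ∀ j, X j, G (Function.update y i a)
      = ∑ p : X i × {x : ∀ j, X j // x i = a}, G p.2.1 := by
    refine (Fintype.sum_bijective _ hbij _ _ ?_).symm
    rintro ⟨c, x, hx⟩
    simp only []
    congr 1
    funext j
    by_cases hj : j = i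
    · subst hj; simp [hx]
    · simp [Function.update_of_ne hj]
  have h2 : ∑ y : ∀ j, X j, (if y i = a then G y else 0)
      = ∑ x : {x : ∀ j, X j // x i = a}, G x.1 := by
    rw [← Finset.sum_filter]
    exact Finset.sum_subtype (p := fun y => y i = a) (Finset.filter (fun y => y i = a) Finset.univ)
      (fun x => by simp) G
  rw [h1, h2, Fintype.sum_prod_type]
  simp [Finset.sum_const, Finset.card_univ, nsmul_eq_mul]

open Classical in
private lemma sum_update_two (d : ℕ) (X : Fin d → Type) [∀ i, Fintype (X i)]
    (m n : Fin d) (hmn : m ≠ n) (a : X m) (b : X n) (F : (∀ j, X j) → ℝ) :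
    ∑ y : ∀ j, X j, F (Function.update (Function.update y m a) n b)
      = ((Fintype.card (X m) : ℝ) * (Fintype.card (X n) : ℝ)) *
        ∑ y : ∀ j, X j, (if y m = a ∧ y n = b then F y else 0) := by
  classical
  have step1 : ∑ y : ∀ j, X j, F (Function.update (Function.update y m a) n b)
      = (Fintype.card (X m) : ℝ) *
        ∑ y : ∀ j, X j, (if y m = a then F (Function.update y n b) else 0) :=
    sum_update_one d X m a (fun z => F (Function.update z n b))
  have step2 : ∑ y : ∀ j, X j, (if y m = a then F (Function.update y n b) else 0)
      = ∑ y : ∀ j, X j, (fun z => if z m = a then F z else 0) (Function.update y n b) := by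
    refine Finset.sum_congr rfl fun y _ => ?_
    simp only [Function.update_of_ne hmn]
  have step3 : ∑ y : ∀ j, X j, (fun z => if z m = a then F z else 0) (Function.update y n b)
      = (Fintype.card (X n) : ℝ) *
        ∑ y : ∀ j, X j, (if y n = b then (if y m = a then F y else 0) else 0) :=
    sum_update_one d X n b (fun z => if z m = a then F z else 0)
  rw [step1, step2, step3, ← mul_assoc]
  congr 1
  refine Finset.sum_congr rfl fun y _ => ?_
  by_cases h1 : y m = a <;> by_cases h2 : y n = b <;> simp [h1, h2]



/-- For a subset `R ⊆ X` with positive second-order marginal counts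
`M_{mn}[χ_R](x_m,x_n) > 0` (m ≠ n), the weighted ANOVA second-order component
`g̃_{mn}(x_m,x_n) = M_{mn}[χ_R·g]/M_{mn}[χ_R] − g̃_m(x_m) − g̃_n(x_n) − g̃_∅`
minimizes the weighted error
`∑_{x ∈ R} (g x − g̃_∅ − g̃_m (x m) − g̃_n (x n) − h (x m) (x n))²`
over all `h : X m → X n → ℝ`. (Marginals over `X_I^⊥` are encoded as full-domain
sums with the relevant coordinates replaced; numerator and denominator of each
ratio are thereby scaled by the same factor, leaving ratios and positivity
conditions unchanged.) -/
theorem weighted_hdmr_second_order_optimal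
    (d : ℕ) (X : Fin d → Type) [∀ i, Fintype (X i)] [∀ i, Nonempty (X i)]
    [DecidableEq (∀ i, X i)]
    (R : Finset (∀ i, X i)) (g : (∀ i, X i) → ℝ) (m n : Fin d) (hmn : m ≠ n)
    (Mchim : X m → ℝ) (Mgm : X m → ℝ) (Mchin : X n → ℝ) (Mgn : X n → ℝ)
    (Mchimn : X m → X n → ℝ) (Mgmn : X m → X n → ℝ)
    (hMchim : ∀ xm : X m,
      Mchim xm = ∑ y : ∀ i, X i, (if Function.update y m xm ∈ R then (1 : ℝ) else 0))
    (hMgm : ∀ xm : X m,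
      Mgm xm = ∑ y : ∀ i, X i,
        (if Function.update y m xm ∈ R then g (Function.update y m xm) else 0))
    (hMchin : ∀ xn : X n,
      Mchin xn = ∑ y : ∀ i, X i, (if Function.update y n xn ∈ R then (1 : ℝ) else 0))
    (hMgn : ∀ xn : X n,
      Mgn xn = ∑ y : ∀ i, X i,
        (if Function.update y n xn ∈ R then g (Function.update y n xn) else 0))
    (hMchimn : ∀ (xm : X m) (xn : X n),
      Mchimn xm xn = ∑ y : ∀ i, X i,
        (if Function.update (Function.update y m xm) n xn ∈ R then (1 : ℝ) else 0))
    (hMgmn : ∀ (xm : X m) (xn : X n),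
      Mgmn xm xn = ∑ y : ∀ i, X i,
        (if Function.update (Function.update y m xm) n xn ∈ R then
          g (Function.update (Function.update y m xm) n xn) else 0))
    (hpos : ∀ (xm : X m) (xn : X n), 0 < Mchimn xm xn)
    (g0 : ℝ) (hg0 : g0 = (∑ x ∈ R, g x) / (R.card : ℝ))
    (g1m : X m → ℝ) (hg1m : ∀ xm : X m, g1m xm = Mgm xm / Mchim xm - g0)
    (g1n : X n → ℝ) (hg1n : ∀ xn : X n, g1n xn = Mgn xn / Mchin xn - g0)
    (g2 : X m → X n → ℝ)
    (hg2 : ∀ (xm : X m) (xn : X n),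
      g2 xm xn = Mgmn xm xn / Mchimn xm xn - g1m xm - g1n xn - g0) :
    ∀ h : X m → X n → ℝ,
      ∑ x ∈ R, (g x - g0 - g1m (x m) - g1n (x n) - g2 (x m) (x n)) ^ 2 ≤
        ∑ x ∈ R, (g x - g0 - g1m (x m) - g1n (x n) - h (x m) (x n)) ^ 2 := by
  classical
  intro h
  set K : ℝ := (Fintype.card (X m) : ℝ) * (Fintype.card (X n) : ℝ) with hK
  have hKpos : 0 < K := by
    have h1 : 0 < Fintype.card (X m) := Fintype.card_pos
    have h2 : 0 < Fintype.card (X n) := Fintype.card_pos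
    exact mul_pos (by exact_mod_cast h1) (by exact_mod_cast h2)
  set c : X m → X n → ℝ :=
    fun a b => ∑ x ∈ R, (if x m = a ∧ x n = b then (1 : ℝ) else 0) with hc
  set s : X m → X n → ℝ :=
    fun a b => ∑ x ∈ R, (if x m = a ∧ x n = b then g x else 0) with hs
  have hfix : ∀ (F : (∀ i, X i) → ℝ) (a : X m) (b : X n),
      ∑ y : ∀ i, X i, (if y m = a ∧ y n = b then (if y ∈ R then F y else 0) else 0)
        = ∑ x ∈ R, (if x m = a ∧ x n = b then F x else 0) := by
    intro F a b
    have hbody : ∀ y : ∀ i, X i,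
        (if y m = a ∧ y n = b then (if y ∈ R then F y else 0) else 0)
          = (if y ∈ R then (if y m = a ∧ y n = b then F y else 0) else 0) := by
      intro y
      by_cases h1 : y m = a ∧ y n = b <;> by_cases h2 : y ∈ R <;> simp [h1, h2]
    rw [Finset.sum_congr rfl fun y _ => hbody y]
    simp [Finset.sum_ite_mem]
  have hchi : ∀ (a : X m) (b : X n), Mchimn a b = K * c a b := by
    intro a b
    rw [hMchimn,
      sum_update_two d X m n hmn a b (fun z => if z ∈ R then (1 : ℝ) else 0)]
    rw [hfix (fun _ => (1 : ℝ)) a b]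
  have hgm : ∀ (a : X m) (b : X n), Mgmn a b = K * s a b := by
    intro a b
    rw [hMgmn,
      sum_update_two d X m n hmn a b (fun z => if z ∈ R then g z else 0)]
    rw [hfix g a b]
  have hcpos : ∀ (a : X m) (b : X n), 0 < c a b := by
    intro a b
    have h1 := hpos a b
    rw [hchi a b] at h1
    by_contra hle
    push_neg at hle
    nlinarith
  have key : ∀ (a : X m) (b : X n) (u : ℝ),
      ∑ x ∈ R, (if x m = a ∧ x n = b then
        (g x - Mgmn a b / Mchimn a b) * u else 0) = 0 := by
    intro a b u
    have hbody : ∀ x : ∀ i, X i,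
        (if x m = a ∧ x n = b then (g x - Mgmn a b / Mchimn a b) * u else 0)
        = (if x m = a ∧ x n = b then g x else 0) * u
          - (Mgmn a b / Mchimn a b * u) * (if x m = a ∧ x n = b then (1 : ℝ) else 0) := by
      intro x
      by_cases h1 : x m = a ∧ x n = b <;> simp [h1] <;> ring
    rw [Finset.sum_congr rfl fun x _ => hbody x, Finset.sum_sub_distrib,
      ← Finset.sum_mul, ← Finset.mul_sum]
    have hcc : c a b ≠ 0 := ne_of_gt (hcpos a b)
    have hKK : K ≠ 0 := ne_of_gt hKpos
    have hA : Mgmn a b / Mchimn a b = s a b / c a b := by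
      rw [hchi a b, hgm a b, mul_div_mul_left _ _ hKK]
    rw [hA]
    have e1 : (∑ x ∈ R, if x m = a ∧ x n = b then g x else 0) = s a b := rfl
    have e2 : (∑ x ∈ R, if x m = a ∧ x n = b then (1 : ℝ) else 0) = c a b := rfl
    rw [e1, e2, mul_right_comm (s a b / c a b) u (c a b), div_mul_cancel₀ _ hcc,
      sub_self]
  have ortho : ∀ u : X m → X n → ℝ,
      ∑ x ∈ R, (g x - Mgmn (x m) (x n) / Mchimn (x m) (x n)) * u (x m) (x n) = 0 := by
    intro u
    have expand : ∀ x : ∀ i, X i,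
        (g x - Mgmn (x m) (x n) / Mchimn (x m) (x n)) * u (x m) (x n)
        = ∑ a : X m, ∑ b : X n,
            (if x m = a ∧ x n = b then (g x - Mgmn a b / Mchimn a b) * u a b else 0) := by
      intro x
      have inner : ∀ a : X m,
          (∑ b : X n, (if x m = a ∧ x n = b then
            (g x - Mgmn a b / Mchimn a b) * u a b else 0))
          = if x m = a then
              (g x - Mgmn a (x n) / Mchimn a (x n)) * u a (x n) else 0 := by
        intro a
        by_cases hca : x m = a <;> simp [hca]
      rw [Finset.sum_congr rfl fun a _ => inner a]
      simp
    rw [Finset.sum_congr rfl fun x _ => expand x, Finset.sum_comm]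
    refine Finset.sum_eq_zero fun a _ => ?_
    rw [Finset.sum_comm]
    exact Finset.sum_eq_zero fun b _ => key a b (u a b)
  have hdiffexp : ∀ x ∈ R,
      (g x - g0 - g1m (x m) - g1n (x n) - h (x m) (x n)) ^ 2
      = (g x - g0 - g1m (x m) - g1n (x n) - g2 (x m) (x n)) ^ 2
        + 2 * ((g x - Mgmn (x m) (x n) / Mchimn (x m) (x n)) *
            (g2 (x m) (x n) - h (x m) (x n)))
        + (g2 (x m) (x n) - h (x m) (x n)) ^ 2 := by
    intro x _
    rw [hg2 (x m) (x n)]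
    ring
  have h0 := ortho fun a b => g2 a b - h a b
  have hsum : ∑ x ∈ R, (g x - g0 - g1m (x m) - g1n (x n) - h (x m) (x n)) ^ 2
      = ∑ x ∈ R, (g x - g0 - g1m (x m) - g1n (x n) - g2 (x m) (x n)) ^ 2
        + 2 * ∑ x ∈ R, (g x - Mgmn (x m) (x n) / Mchimn (x m) (x n)) *
            (g2 (x m) (x n) - h (x m) (x n))
        + ∑ x ∈ R, (g2 (x m) (x n) - h (x m) (x n)) ^ 2 := by
    rw [Finset.sum_congr rfl hdiffexp, Finset.sum_add_distrib, Finset.sum_add_distrib,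
      Finset.mul_sum]
  rw [hsum, h0]
  have hnn : 0 ≤ ∑ x ∈ R, (g2 (x m) (x n) - h (x m) (x n)) ^ 2 :=
    Finset.sum_nonneg fun x _ => sq_nonneg _
  linarith
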